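/- Let $p = 2k$ be an even integer with $k \geq 2$. Let $\hat{\sigma}, \hat{\omega}$ be weights on $\mathbb{R}$ and define $\sigma(x_1, x_2) = \hat{\sigma}(x_1)$, $\omega(x_1, x_2) = \hat{\omega}(x_1)$ on $\mathbb{R}^2$. Let $\mathcal{E} = \{ I_1 \times [0, \ell(I_1)) : I_1 \in \mathcal{D}([0,1)) \}$ and for $I = I_1 \times I_2 \in \mathcal{E}$ let $J(I) = I_1 \times [10\ell(I_1), 10\ell(I_1) + 100)$. Then the rectangular quadratic Muckenhoupt characteristic equals, up to constants depending only on $p$, the one-dimensional quadratic Muckenhoupt characteristic: $A_p^{\ell^2, \mathrm{rectangular}, \mathcal{E}}(\sigma, \omega) \approx A_p^{\ell^2, \mathrm{local}, \mathcal{D}([0,1))}(\hat{\sigma}, \hat{\omega})$. -/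

import Mathlib

open MeasureTheory Set ENNReal

/-- Index type for the dyadic subintervals of `[0,1)`. -/
def DyIdx : Type := {q : ℕ × ℕ // q.2 < 2 ^ q.1}

/-- The sidelength `2^{-t}` of the dyadic interval of generation `t`. -/
noncomputable def dyLen (i : DyIdx) : ℝ := (2 : ℝ) ^ (-(i.1.1 : ℤ))

/-- The dyadic subinterval `[j 2^{-t}, (j+1) 2^{-t}) ⊆ [0,1)`. -/
noncomputable def dyIco (i : DyIdx) : Set ℝ :=
  Set.Ico ((i.1.2 : ℝ) * dyLen i) (((i.1.2 : ℝ) + 1) * dyLen i)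

/-- The square `I₁ × [0, ℓ(I₁))` of the collection `ℰ`. -/
noncomputable def sqE (i : DyIdx) : Set (ℝ × ℝ) := dyIco i ×ˢ Set.Ico (0 : ℝ) (dyLen i)

/-- The associated rectangle `J(I) = I₁ × [10ℓ(I₁), 10ℓ(I₁)+100)`. -/
noncomputable def rectJ (i : DyIdx) : Set (ℝ × ℝ) :=
  dyIco i ×ˢ Set.Ico (10 * dyLen i) (10 * dyLen i + 100)

/-- `E_I μ` for the weight `μ̂(x₁)` on the plane, over the square `sqE i`. -/
noncomputable def EsqE (μh : ℝ → ℝ≥0∞) (i : DyIdx) : ℝ≥0∞ :=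
  (∫⁻ y in sqE i, μh y.1 ∂volume) / volume (sqE i)

/-- `E_I μ̂` over the dyadic interval `dyIco i` on the line. -/
noncomputable def E1d (μh : ℝ → ℝ≥0∞) (i : DyIdx) : ℝ≥0∞ :=
  (∫⁻ x in dyIco i, μh x ∂volume) / volume (dyIco i)

/-- The rectangular quadratic Muckenhoupt characteristic
`A_p^{ℓ²,rectangular,ℰ}(σ,ω)` for the tensored weights `σ(x) = σ̂(x₁)`,
`ω(x) = ω̂(x₁)`, as the supremum of the relevant ratios. -/
noncomputable def ArectChar (p : ℝ) (σh ωh : ℝ → ℝ≥0∞) : ℝ≥0∞ :=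
  ⨆ a : DyIdx → ℝ,
    (∫⁻ x : ℝ × ℝ,
        (∑' i : DyIdx, ENNReal.ofReal ((a i) ^ 2) * (EsqE σh i) ^ 2 *
          (rectJ i).indicator (fun _ => (1 : ℝ≥0∞)) x) ^ (p / 2) * ωh x.1 ∂volume) ^ (1 / p) /
    (∫⁻ x : ℝ × ℝ,
        (∑' i : DyIdx, ENNReal.ofReal ((a i) ^ 2) *
          (rectJ i).indicator (fun _ => (1 : ℝ≥0∞)) x) ^ (p / 2) * σh x.1 ∂volume) ^ (1 / p)

/-- The one-dimensional local quadratic Muckenhoupt characteristic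
`A_p^{ℓ²,local,𝒟([0,1))}(σ̂,ω̂)`, as the supremum of the relevant ratios. -/
noncomputable def A1dChar (p : ℝ) (σh ωh : ℝ → ℝ≥0∞) : ℝ≥0∞ :=
  ⨆ a : DyIdx → ℝ,
    (∫⁻ x : ℝ,
        (∑' i : DyIdx, ENNReal.ofReal ((a i) ^ 2) * (E1d σh i) ^ 2 *
          (dyIco i).indicator (fun _ => (1 : ℝ≥0∞)) x) ^ (p / 2) * ωh x ∂volume) ^ (1 / p) /
    (∫⁻ x : ℝ,
        (∑' i : DyIdx, ENNReal.ofReal ((a i) ^ 2) *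
          (dyIco i).indicator (fun _ => (1 : ℝ≥0∞)) x) ^ (p / 2) * σh x ∂volume) ^ (1 / p)

/-! ### Auxiliary material -/

instance : Countable DyIdx := inferInstanceAs (Countable {q : ℕ × ℕ // q.2 < 2 ^ q.1})

lemma dyLen_pos (i : DyIdx) : 0 < dyLen i := zpow_pos (by norm_num) _

lemma dyLen_le_one (i : DyIdx) : dyLen i ≤ 1 := zpow_le_one_of_nonpos₀ (by norm_num) (by simp)

lemma volume_dyIco (i : DyIdx) : volume (dyIco i) = ENNReal.ofReal (dyLen i) := by
  rw [dyIco, Real.volume_Ico]; congr 1; ring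

lemma measurableSet_dyIco (i : DyIdx) : MeasurableSet (dyIco i) := measurableSet_Ico

lemma measurableSet_rectJ (i : DyIdx) : MeasurableSet (rectJ i) :=
  measurableSet_Ico.prod measurableSet_Ico

/-- The average over the square equals the 1d average, for a tensored weight. -/
lemma EsqE_eq {μh : ℝ → ℝ≥0∞} (hμ : Measurable μh) (i : DyIdx) : EsqE μh i = E1d μh i := by
  have hc0 : ENNReal.ofReal (dyLen i) ≠ 0 := by
    simp [ENNReal.ofReal_eq_zero, not_le, dyLen_pos i]
  have hct : ENNReal.ofReal (dyLen i) ≠ ∞ := ENNReal.ofReal_ne_top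
  have hvol : volume (sqE i) = volume (dyIco i) * ENNReal.ofReal (dyLen i) := by
    rw [sqE, Measure.volume_eq_prod, Measure.prod_prod, Real.volume_Ico, sub_zero]
  have hint : (∫⁻ y in sqE i, μh y.1 ∂volume)
      = (∫⁻ x in dyIco i, μh x ∂volume) * ENNReal.ofReal (dyLen i) := by
    have hf : Measurable fun z : ℝ × ℝ => μh z.1 := hμ.comp measurable_fst
    rw [sqE, Measure.volume_eq_prod, ← Measure.prod_restrict,
      lintegral_prod _ hf.aemeasurable]
    simp only [lintegral_const, Measure.restrict_apply_univ, Real.volume_Ico, sub_zero]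
    rw [lintegral_mul_const _ hμ]
  rw [EsqE, E1d, hint, hvol, ENNReal.mul_div_mul_right _ _ hc0 hct]

/-- The restriction of a coefficient family to the generations active at height `x₂`. -/
noncomputable def restr (a : DyIdx → ℝ) (x₂ : ℝ) (i : DyIdx) : ℝ :=
  if 10 * dyLen i ≤ x₂ ∧ x₂ < 10 * dyLen i + 100 then a i else 0

lemma restr_all (a : DyIdx → ℝ) {x₂ : ℝ} (h1 : 10 ≤ x₂) (h2 : x₂ < 100) :
    restr a x₂ = a := by
  funext i
  have h := dyLen_pos i
  have h' := dyLen_le_one i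
  exact if_pos ⟨by nlinarith, by nlinarith⟩

lemma restr_outside (a : DyIdx → ℝ) {x₂ : ℝ} (h : x₂ ∉ Set.Ico (0 : ℝ) 110) (i : DyIdx) :
    restr a x₂ i = 0 := by
  rw [Set.mem_Ico, not_and_or, not_le, not_lt] at h
  have h1 := dyLen_pos i
  have h2 := dyLen_le_one i
  refine if_neg fun hc => ?_
  rcases h with h | h
  · nlinarith [hc.1]
  · nlinarith [hc.2]

/-- The key pointwise identity between rectangular and 1d terms. -/
lemma term_eq (a : DyIdx → ℝ) (E : DyIdx → ℝ≥0∞) (i : DyIdx) (x₁ x₂ : ℝ) :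
    ENNReal.ofReal ((a i) ^ 2) * E i * (rectJ i).indicator (fun _ => (1 : ℝ≥0∞)) (x₁, x₂)
      = ENNReal.ofReal ((restr a x₂ i) ^ 2) * E i *
        (dyIco i).indicator (fun _ => (1 : ℝ≥0∞)) x₁ := by
  rw [restr]
  by_cases h₂ : 10 * dyLen i ≤ x₂ ∧ x₂ < 10 * dyLen i + 100
  · rw [if_pos h₂]
    congr 1
    have hmem : ((x₁, x₂) ∈ rectJ i) ↔ x₁ ∈ dyIco i := by
      simp [rectJ, Set.mem_Ico, h₂.1, h₂.2]
    by_cases h₁ : x₁ ∈ dyIco i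
    · rw [Set.indicator_of_mem (hmem.mpr h₁), Set.indicator_of_mem h₁]
    · rw [Set.indicator_of_notMem (fun hm => h₁ (hmem.mp hm)), Set.indicator_of_notMem h₁]
  · rw [if_neg h₂]
    have hnm : (x₁, x₂) ∉ rectJ i := fun hm => h₂ ⟨hm.2.1, hm.2.2⟩
    rw [Set.indicator_of_notMem hnm]
    simp

lemma term_eq' (a : DyIdx → ℝ) (i : DyIdx) (x₁ x₂ : ℝ) :
    ENNReal.ofReal ((a i) ^ 2) * (rectJ i).indicator (fun _ => (1 : ℝ≥0∞)) (x₁, x₂)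
      = ENNReal.ofReal ((restr a x₂ i) ^ 2) *
        (dyIco i).indicator (fun _ => (1 : ℝ≥0∞)) x₁ := by
  have := term_eq a (fun _ => 1) i x₁ x₂
  simpa [mul_one] using this

/-- Measurability of the generic rectangular integrand. -/
lemma meas_integrand (c : DyIdx → ℝ≥0∞) (q : ℝ) {w : ℝ → ℝ≥0∞} (hw : Measurable w) :
    Measurable (fun x : ℝ × ℝ =>
      (∑' i : DyIdx, c i * (rectJ i).indicator (fun _ => (1 : ℝ≥0∞)) x) ^ q * w x.1) := by
  refine Measurable.mul ?_ (hw.comp measurable_fst)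
  exact (ENNReal.continuous_rpow_const.measurable).comp
    (Measurable.ennreal_tsum fun i =>
      (measurable_const.indicator (measurableSet_rectJ i)).const_mul _)

/-- The one-dimensional numerator functional. -/
noncomputable def Num1 (p : ℝ) (σh ωh : ℝ → ℝ≥0∞) (a : DyIdx → ℝ) : ℝ≥0∞ :=
  ∫⁻ x : ℝ,
    (∑' i : DyIdx, ENNReal.ofReal ((a i) ^ 2) * (E1d σh i) ^ 2 *
      (dyIco i).indicator (fun _ => (1 : ℝ≥0∞)) x) ^ (p / 2) * ωh x ∂volume

/-- The one-dimensional denominator functional. -/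
noncomputable def Den1 (p : ℝ) (σh : ℝ → ℝ≥0∞) (a : DyIdx → ℝ) : ℝ≥0∞ :=
  ∫⁻ x : ℝ,
    (∑' i : DyIdx, ENNReal.ofReal ((a i) ^ 2) *
      (dyIco i).indicator (fun _ => (1 : ℝ≥0∞)) x) ^ (p / 2) * σh x ∂volume

/-- The rectangular numerator functional. -/
noncomputable def NumR (p : ℝ) (σh ωh : ℝ → ℝ≥0∞) (a : DyIdx → ℝ) : ℝ≥0∞ :=
  ∫⁻ x : ℝ × ℝ,
    (∑' i : DyIdx, ENNReal.ofReal ((a i) ^ 2) * (EsqE σh i) ^ 2 *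
      (rectJ i).indicator (fun _ => (1 : ℝ≥0∞)) x) ^ (p / 2) * ωh x.1 ∂volume

/-- The rectangular denominator functional. -/
noncomputable def DenR (p : ℝ) (σh : ℝ → ℝ≥0∞) (a : DyIdx → ℝ) : ℝ≥0∞ :=
  ∫⁻ x : ℝ × ℝ,
    (∑' i : DyIdx, ENNReal.ofReal ((a i) ^ 2) *
      (rectJ i).indicator (fun _ => (1 : ℝ≥0∞)) x) ^ (p / 2) * σh x.1 ∂volume

lemma A1dChar_eq (p : ℝ) (σh ωh : ℝ → ℝ≥0∞) :
    A1dChar p σh ωh = ⨆ a : DyIdx → ℝ, (Num1 p σh ωh a) ^ (1 / p) / (Den1 p σh a) ^ (1 / p) := rfl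

lemma ArectChar_eq (p : ℝ) (σh ωh : ℝ → ℝ≥0∞) :
    ArectChar p σh ωh = ⨆ a : DyIdx → ℝ, (NumR p σh ωh a) ^ (1 / p) / (DenR p σh a) ^ (1 / p) := rfl

lemma NumR_repr (p : ℝ) {σh ωh : ℝ → ℝ≥0∞} (hσ : Measurable σh) (hω : Measurable ωh)
    (a : DyIdx → ℝ) :
    NumR p σh ωh a = ∫⁻ x₂ : ℝ, Num1 p σh ωh (restr a x₂) ∂volume := by
  rw [NumR, Measure.volume_eq_prod,
    lintegral_prod_symm _
      (meas_integrand (fun i => ENNReal.ofReal ((a i) ^ 2) * (EsqE σh i) ^ 2) (p / 2)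
        hω).aemeasurable]
  refine lintegral_congr fun x₂ => ?_
  rw [Num1]
  refine lintegral_congr fun x₁ => ?_
  congr 2
  refine tsum_congr fun i => ?_
  rw [EsqE_eq hσ i]
  exact term_eq a (fun j => (E1d σh j) ^ 2) i x₁ x₂

lemma DenR_repr (p : ℝ) {σh : ℝ → ℝ≥0∞} (hσ : Measurable σh) (a : DyIdx → ℝ) :
    DenR p σh a = ∫⁻ x₂ : ℝ, Den1 p σh (restr a x₂) ∂volume := by
  rw [DenR, Measure.volume_eq_prod,
    lintegral_prod_symm _
      (meas_integrand (fun i => ENNReal.ofReal ((a i) ^ 2)) (p / 2) hσ).aemeasurable]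
  refine lintegral_congr fun x₂ => ?_
  rw [Den1]
  refine lintegral_congr fun x₁ => ?_
  congr 2
  exact tsum_congr fun i => term_eq' a i x₁ x₂

lemma Den1_restr_meas (p : ℝ) {σh : ℝ → ℝ≥0∞} (hσ : Measurable σh) (a : DyIdx → ℝ) :
    Measurable (fun x₂ : ℝ => Den1 p σh (restr a x₂)) := by
  have hG := meas_integrand (fun i => ENNReal.ofReal ((a i) ^ 2)) (p / 2) hσ
  have heq : (fun x₂ : ℝ => Den1 p σh (restr a x₂))
      = fun x₂ : ℝ => ∫⁻ x₁ : ℝ,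
          (∑' i : DyIdx, ENNReal.ofReal ((a i) ^ 2) *
            (rectJ i).indicator (fun _ => (1 : ℝ≥0∞)) (x₁, x₂)) ^ (p / 2) * σh x₁ ∂volume := by
    funext x₂
    rw [Den1]
    refine lintegral_congr fun x₁ => ?_
    congr 2
    exact (tsum_congr fun i => term_eq' a i x₁ x₂).symm
  rw [heq]
  exact Measurable.lintegral_prod_right (f := fun x₂ x₁ =>
      (∑' i : DyIdx, ENNReal.ofReal ((a i) ^ 2) *
        (rectJ i).indicator (fun _ => (1 : ℝ≥0∞)) (x₁, x₂)) ^ (p / 2) * σh x₁)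
    (hG.comp measurable_swap)

lemma Den1_restr_le (p : ℝ) (hq : 0 ≤ p / 2) (σh : ℝ → ℝ≥0∞) (a : DyIdx → ℝ) (x₂ : ℝ) :
    Den1 p σh (restr a x₂) ≤ Den1 p σh a := by
  refine lintegral_mono fun x => mul_le_mul_left (ENNReal.rpow_le_rpow ?_ hq) _
  refine Summable.tsum_le_tsum (fun i => mul_le_mul_left ?_ _) ENNReal.summable ENNReal.summable
  rw [restr]
  split
  · exact le_rfl
  · simp

lemma Den1_restr_zero (p : ℝ) (hq : 0 < p / 2) (σh : ℝ → ℝ≥0∞) (a : DyIdx → ℝ) {x₂ : ℝ}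
    (h : x₂ ∉ Set.Ico (0 : ℝ) 110) : Den1 p σh (restr a x₂) = 0 := by
  rw [Den1]
  have : ∀ x : ℝ, (∑' i : DyIdx, ENNReal.ofReal ((restr a x₂ i) ^ 2) *
      (dyIco i).indicator (fun _ => (1 : ℝ≥0∞)) x) = 0 := by
    intro x
    refine ENNReal.summable.tsum_eq_zero_iff |>.mpr fun i => ?_
    rw [restr_outside a h i]
    simp
  simp only [this, ENNReal.zero_rpow_of_pos hq, zero_mul, lintegral_zero]

/-- Division comparison in `ℝ≥0∞`. -/
lemma ldiv {a b c d k₁ k₂ : ℝ≥0∞} (hk₂0 : k₂ ≠ 0) (hk₂t : k₂ ≠ ∞)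
    (h₁ : a ≤ k₁ * c) (h₂ : d ≤ k₂ * b) : a / b ≤ (k₁ * k₂) * (c / d) := by
  have hb : b⁻¹ ≤ d⁻¹ * k₂ := by
    have hdb : d * k₂⁻¹ ≤ b := by
      calc d * k₂⁻¹ ≤ (k₂ * b) * k₂⁻¹ := mul_le_mul_left h₂ _
        _ = b := by rw [mul_comm k₂ b, mul_assoc, ENNReal.mul_inv_cancel hk₂0 hk₂t, mul_one]
    calc b⁻¹ ≤ (d * k₂⁻¹)⁻¹ := ENNReal.inv_le_inv.mpr hdb
      _ = d⁻¹ * k₂ := by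
          rw [ENNReal.mul_inv (Or.inr (ENNReal.inv_ne_top.mpr hk₂0))
            (Or.inr (ENNReal.inv_ne_zero.mpr hk₂t)), inv_inv]
  rw [div_eq_mul_inv, div_eq_mul_inv]
  calc a * b⁻¹ ≤ (k₁ * c) * (d⁻¹ * k₂) := mul_le_mul' h₁ hb
    _ = (k₁ * k₂) * (c * d⁻¹) := by ring

/-- From a ratio bound to a linear bound. -/
lemma num_le {p : ℝ} (hp : 0 < p) {A N D : ℝ≥0∞} (hA : A ≠ ∞) (hD : D ≠ ∞)
    (h : N ^ (1 / p) / D ^ (1 / p) ≤ A) : N ≤ A ^ p * D := by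
  have hDt : D ^ (1 / p) ≠ ∞ :=
    ENNReal.rpow_ne_top_of_nonneg (by positivity) hD
  have h' : N ^ (1 / p) ≤ A * D ^ (1 / p) :=
    (ENNReal.div_le_iff_le_mul (Or.inr hA) (Or.inl hDt)).mp h
  calc N = (N ^ (1 / p)) ^ p := by
        rw [← ENNReal.rpow_mul, one_div, inv_mul_cancel₀ hp.ne', ENNReal.rpow_one]
    _ ≤ (A * D ^ (1 / p)) ^ p := ENNReal.rpow_le_rpow h' hp.le
    _ = A ^ p * D := by
        rw [ENNReal.mul_rpow_of_nonneg _ _ hp.le, ← ENNReal.rpow_mul, one_div,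
          inv_mul_cancel₀ hp.ne', ENNReal.rpow_one]

/-- For `p = 2k` an even integer `≥ 4`, the rectangular quadratic Muckenhoupt
characteristic of the tensored weights is comparable, with constants depending only
on `p`, to the one-dimensional quadratic Muckenhoupt characteristic. -/
theorem stmt16 (k : ℕ) (hk : 2 ≤ k) :
    ∃ C : ℝ≥0∞, 0 < C ∧ C < ∞ ∧
      ∀ σh ωh : ℝ → ℝ≥0∞, Measurable σh → Measurable ωh →
        ArectChar (2 * k : ℝ) σh ωh ≤ C * A1dChar (2 * k : ℝ) σh ωh ∧
        A1dChar (2 * k : ℝ) σh ωh ≤ C * ArectChar (2 * k : ℝ) σh ωh := by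
  refine ⟨110, by norm_num, ENNReal.ofNat_lt_top, ?_⟩
  intro σh ωh hσ hω
  set p : ℝ := (2 * k : ℝ) with hpdef
  have hk2 : (2 : ℝ) ≤ (k : ℝ) := by exact_mod_cast hk
  have hp : 0 < p := by rw [hpdef]; nlinarith
  have hp1 : 1 ≤ p := by rw [hpdef]; nlinarith
  have hq : 0 < p / 2 := by positivity
  have hr0 : 0 < 1 / p := by positivity
  have hr1 : 1 / p ≤ 1 := by rw [div_le_one hp]; linarith
  constructor
  · -- rectangular ≤ 110 * 1d
    by_cases hA : A1dChar p σh ωh = ∞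
    · rw [hA, ENNReal.mul_top (by norm_num)]; exact le_top
    · rw [ArectChar_eq]
      refine iSup_le fun a => ?_
      by_cases hD : DenR p σh a = ∞
      · rw [hD, ENNReal.top_rpow_of_pos hr0, ENNReal.div_top]
        exact zero_le
      · have hrepr : DenR p σh a = ∫⁻ x₂ : ℝ, Den1 p σh (restr a x₂) ∂volume :=
          DenR_repr p hσ a
        have hae : ∀ᵐ x₂ ∂(volume : Measure ℝ), Den1 p σh (restr a x₂) < ∞ :=
          ae_lt_top (Den1_restr_meas p hσ a) (hrepr ▸ hD)
        have key : NumR p σh ωh a ≤ (A1dChar p σh ωh) ^ p * DenR p σh a := by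
          rw [NumR_repr p hσ hω a, hrepr,
            ← lintegral_const_mul' _ _ (ENNReal.rpow_ne_top_of_nonneg hp.le hA)]
          refine lintegral_mono_ae (hae.mono fun x₂ hx => ?_)
          refine num_le hp hA hx.ne ?_
          rw [A1dChar_eq]
          exact le_iSup (fun b => (Num1 p σh ωh b) ^ (1 / p) / (Den1 p σh b) ^ (1 / p))
            (restr a x₂)
        have hle : (NumR p σh ωh a) ^ (1 / p)
            ≤ A1dChar p σh ωh * (DenR p σh a) ^ (1 / p) := by
          calc (NumR p σh ωh a) ^ (1 / p)
              ≤ ((A1dChar p σh ωh) ^ p * DenR p σh a) ^ (1 / p) :=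
                ENNReal.rpow_le_rpow key hr0.le
            _ = A1dChar p σh ωh * (DenR p σh a) ^ (1 / p) := by
                rw [ENNReal.mul_rpow_of_nonneg _ _ hr0.le, ← ENNReal.rpow_mul,
                  mul_one_div, div_self hp.ne', ENNReal.rpow_one]
        calc (NumR p σh ωh a) ^ (1 / p) / (DenR p σh a) ^ (1 / p)
            ≤ A1dChar p σh ωh := ENNReal.div_le_of_le_mul hle
          _ ≤ 110 * A1dChar p σh ωh := le_mul_of_one_le_left zero_le (by norm_num)
  · -- 1d ≤ 110 * rectangular
    rw [A1dChar_eq]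
    refine iSup_le fun a => ?_
    have hNrepr := NumR_repr p hσ hω a
    have hDrepr := DenR_repr p hσ a
    have h90 : ENNReal.ofReal 90 * Num1 p σh ωh a ≤ NumR p σh ωh a := by
      rw [hNrepr]
      have hset : (∫⁻ x₂ in Set.Ico (10 : ℝ) 100, Num1 p σh ωh (restr a x₂) ∂volume)
          = ENNReal.ofReal 90 * Num1 p σh ωh a := by
        rw [setLIntegral_congr_fun measurableSet_Ico
          (fun x₂ hx => by
            rw [restr_all a hx.1 hx.2]),
          setLIntegral_const, Real.volume_Ico, mul_comm]
        norm_num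
      rw [← hset]
      exact setLIntegral_le_lintegral _ _
    have h110 : DenR p σh a ≤ ENNReal.ofReal 110 * Den1 p σh a := by
      rw [hDrepr]
      calc (∫⁻ x₂ : ℝ, Den1 p σh (restr a x₂) ∂volume)
          ≤ ∫⁻ x₂ : ℝ, (Set.Ico (0 : ℝ) 110).indicator (fun _ => Den1 p σh a) x₂ ∂volume := by
            refine lintegral_mono fun x₂ => ?_
            by_cases hx : x₂ ∈ Set.Ico (0 : ℝ) 110
            · rw [Set.indicator_of_mem hx]
              exact Den1_restr_le p hq.le σh a x₂
            · rw [Set.indicator_of_notMem hx, Den1_restr_zero p hq σh a hx]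
        _ = Den1 p σh a * volume (Set.Ico (0 : ℝ) 110) := by
            rw [lintegral_indicator measurableSet_Ico, setLIntegral_const]
        _ = ENNReal.ofReal 110 * Den1 p σh a := by
            rw [Real.volume_Ico, mul_comm]
            norm_num
    have h1 : Num1 p σh ωh a ≤ (ENNReal.ofReal 90)⁻¹ * NumR p σh ωh a := by
      have h90ne : ENNReal.ofReal 90 ≠ 0 := by
        simp [ENNReal.ofReal_eq_zero]
      calc Num1 p σh ωh a
          = (ENNReal.ofReal 90)⁻¹ * (ENNReal.ofReal 90 * Num1 p σh ωh a) := by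
            rw [← mul_assoc, ENNReal.inv_mul_cancel h90ne ENNReal.ofReal_ne_top, one_mul]
        _ ≤ (ENNReal.ofReal 90)⁻¹ * NumR p σh ωh a := mul_le_mul_right h90 _
    have hdiv : Num1 p σh ωh a / Den1 p σh a
        ≤ ((ENNReal.ofReal 90)⁻¹ * ENNReal.ofReal 110) * (NumR p σh ωh a / DenR p σh a) :=
      ldiv (by simp [ENNReal.ofReal_eq_zero]) ENNReal.ofReal_ne_top h1 h110
    have hK : ((ENNReal.ofReal 90)⁻¹ * ENNReal.ofReal 110) ≤ (110 : ℝ≥0∞) := by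
      calc (ENNReal.ofReal 90)⁻¹ * ENNReal.ofReal 110
          ≤ 1 * ENNReal.ofReal 110 :=
            mul_le_mul_left (ENNReal.inv_le_one.mpr (ENNReal.one_le_ofReal.mpr (by norm_num))) _
        _ = ENNReal.ofReal 110 := one_mul _
        _ = (110 : ℝ≥0∞) := by norm_num
    have hKpow : (((ENNReal.ofReal 90)⁻¹ * ENNReal.ofReal 110)) ^ (1 / p) ≤ (110 : ℝ≥0∞) := by
      calc (((ENNReal.ofReal 90)⁻¹ * ENNReal.ofReal 110)) ^ (1 / p)
          ≤ (110 : ℝ≥0∞) ^ (1 / p) := ENNReal.rpow_le_rpow hK hr0.le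
        _ ≤ (110 : ℝ≥0∞) ^ (1 : ℝ) :=
            ENNReal.rpow_le_rpow_of_exponent_le (by norm_num) hr1
        _ = (110 : ℝ≥0∞) := ENNReal.rpow_one _
    calc (Num1 p σh ωh a) ^ (1 / p) / (Den1 p σh a) ^ (1 / p)
        = (Num1 p σh ωh a / Den1 p σh a) ^ (1 / p) :=
          (ENNReal.div_rpow_of_nonneg _ _ hr0.le).symm
      _ ≤ ((((ENNReal.ofReal 90)⁻¹ * ENNReal.ofReal 110)) * (NumR p σh ωh a / DenR p σh a)) ^ (1 / p) :=
          ENNReal.rpow_le_rpow hdiv hr0.le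
      _ = (((ENNReal.ofReal 90)⁻¹ * ENNReal.ofReal 110)) ^ (1 / p) *
            (NumR p σh ωh a / DenR p σh a) ^ (1 / p) :=
          ENNReal.mul_rpow_of_nonneg _ _ hr0.le
      _ ≤ (110 : ℝ≥0∞) * ((NumR p σh ωh a) ^ (1 / p) / (DenR p σh a) ^ (1 / p)) := by
          rw [ENNReal.div_rpow_of_nonneg _ _ hr0.le]
          exact mul_le_mul_left hKpow _
      _ ≤ (110 : ℝ≥0∞) * ArectChar p σh ωh := by
          refine mul_le_mul_right ?_ _
          rw [ArectChar_eq]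
          exact le_iSup (fun b => (NumR p σh ωh b) ^ (1 / p) / (DenR p σh b) ^ (1 / p)) a
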